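/- With C the general symmetric Choi operator (parameters c₁,…,c₆ as in the paper) and D the decoherence map in the |±⟩ basis, the condition (D⊗D)∘B∘D = B_cl (classical consistency on the |±⟩ basis) holds if and only if c₃ = 1 − c₂, c₅ = c₄ − 1/2, and c₆ = 2 − c₁ − 4c₄. -/
import Mathlib


open Matrix Complex

noncomputable section

/-- The general Choi operator (Eq. (12)) of a map satisfying phase covariance,
flip covariance and permutation invariance. -/
noncomputable def Cgen (c1 c2 c3 c4 c5 c6 : ℂ) : Matrix (Fin 8) (Fin 8) ℂ :=
  !![c1, 0, 0, c2, 0, c2, 0, 0;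
     0, c6, 0, 0, 0, 0, 0, 0;
     0, 0, c4+c5, 0, c4-c5, 0, 0, c3;
     c3, 0, 0, c4+c5, 0, c4-c5, 0, 0;
     0, 0, c4-c5, 0, c4+c5, 0, 0, c3;
     c3, 0, 0, c4-c5, 0, c4+c5, 0, 0;
     0, 0, 0, 0, 0, 0, c6, 0;
     0, 0, c2, 0, c2, 0, 0, c1]

def idx (m : Fin 4) (k : Fin 2) : Fin 8 :=
  ⟨2 * m.val + k.val, by have := m.isLt; have := k.isLt; omega⟩

noncomputable def ptrace12 (C : Matrix (Fin 8) (Fin 8) ℂ) : Matrix (Fin 2) (Fin 2) ℂ :=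
  Matrix.of fun k l => ∑ m : Fin 4, C (idx m k) (idx m l)

def pr (a b : Fin 2) : Fin 4 :=
  ⟨2 * a.val + b.val, by have := a.isLt; have := b.isLt; omega⟩

/-- The map with Choi operator `C` (third tensor factor = input):
`B(ρ) = Tr₃[(1 ⊗ ρᵀ) C]`, in components. -/
noncomputable def Bof (C : Matrix (Fin 8) (Fin 8) ℂ) (ρ : Matrix (Fin 2) (Fin 2) ℂ) :
    Matrix (Fin 4) (Fin 4) ℂ :=
  Matrix.of fun m n => ∑ k : Fin 2, ∑ k' : Fin 2, ρ k' k * C (idx m k') (idx n k)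

/-- Partial trace over the first output qubit. -/
noncomputable def tr1 (M : Matrix (Fin 4) (Fin 4) ℂ) : Matrix (Fin 2) (Fin 2) ℂ :=
  Matrix.of fun b b' => ∑ a : Fin 2, M (pr a b) (pr a b')

/-- Partial trace over the second output qubit. -/
noncomputable def tr2 (M : Matrix (Fin 4) (Fin 4) ℂ) : Matrix (Fin 2) (Fin 2) ℂ :=
  Matrix.of fun a a' => ∑ b : Fin 2, M (pr a b) (pr a' b)

def d1 (p : Fin 4) : Fin 2 := ⟨p.val / 2, by have := p.isLt; omega⟩
def d2 (p : Fin 4) : Fin 2 := ⟨p.val % 2, by omega⟩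

/-- The `|±⟩` basis vectors: `uvec 0 = |+⟩`, `uvec 1 = |−⟩`. -/
noncomputable def uvec (s k : Fin 2) : ℂ :=
  (if s = 1 ∧ k = 1 then -1 else 1) / (Real.sqrt 2 : ℝ)

/-- Two-qubit product vectors `|s t⟩` in the `|±⟩` basis. -/
noncomputable def wvec (s t : Fin 2) (p : Fin 4) : ℂ := uvec s (d1 p) * uvec t (d2 p)

/-- The decoherence map `D` in the `|±⟩` basis. -/
noncomputable def Dmap (ρ : Matrix (Fin 2) (Fin 2) ℂ) : Matrix (Fin 2) (Fin 2) ℂ :=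
  Matrix.of fun i j => ∑ s : Fin 2,
    uvec s i * uvec s j * ∑ k : Fin 2, ∑ l : Fin 2, uvec s k * ρ k l * uvec s l

/-- The two-qubit decoherence map `D ⊗ D` in the `|±⟩` basis. -/
noncomputable def DDmap (M : Matrix (Fin 4) (Fin 4) ℂ) : Matrix (Fin 4) (Fin 4) ℂ :=
  Matrix.of fun p q => ∑ s : Fin 2, ∑ t : Fin 2,
    wvec s t p * wvec s t q * ∑ p' : Fin 4, ∑ q' : Fin 4, wvec s t p' * M p' q' * wvec s t q'

/-- The classical broadcasting map in the `|±⟩` basis: `B_cl(|s⟩⟨t|) = δ_{st}|ss⟩⟨ss|`. -/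
noncomputable def Bcl (ρ : Matrix (Fin 2) (Fin 2) ℂ) : Matrix (Fin 4) (Fin 4) ℂ :=
  Matrix.of fun p q => ∑ s : Fin 2,
    wvec s s p * wvec s s q * ∑ k : Fin 2, ∑ l : Fin 2, uvec s k * ρ k l * uvec s l


noncomputable def sx : ℂ := ((Real.sqrt 2 : ℝ) : ℂ)⁻¹
lemma hsx2 : sx ^ 2 = 1 / 2 := by
  rw [sx, ← ofReal_inv]
  norm_cast
  rw [sq, ← mul_inv, Real.mul_self_sqrt] <;> norm_num
lemma hsx4 : sx ^ 4 = 1 / 4 := by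
  have h : sx ^ 4 = (sx ^ 2) ^ 2 := by ring
  rw [h, hsx2]; norm_num
lemma hsx6 : sx ^ 6 = 1 / 8 := by
  have h : sx ^ 6 = (sx ^ 2) ^ 3 := by ring
  rw [h, hsx2]; norm_num
lemma hsx8 : sx ^ 8 = 1 / 16 := by
  have h : sx ^ 8 = (sx ^ 2) ^ 4 := by ring
  rw [h, hsx2]; norm_num
lemma hsx10 : sx ^ 10 = 1 / 32 := by
  have h : sx ^ 10 = (sx ^ 2) ^ 5 := by ring
  rw [h, hsx2]; norm_num
lemma hsx12 : sx ^ 12 = 1 / 64 := by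
  have h : sx ^ 12 = (sx ^ 2) ^ 6 := by ring
  rw [h, hsx2]; norm_num
@[simp] lemma u00 : uvec 0 0 = sx := by simp [uvec, sx, one_div]
@[simp] lemma u01 : uvec 0 1 = sx := by simp [uvec, sx, one_div]
@[simp] lemma u10 : uvec 1 0 = sx := by simp [uvec, sx, one_div]
@[simp] lemma u11 : uvec 1 1 = -sx := by simp [uvec, sx, one_div, neg_div]
@[simp] lemma d1_0 : d1 0 = 0 := rfl
@[simp] lemma d1_1 : d1 1 = 0 := rfl
@[simp] lemma d1_2 : d1 2 = 1 := rfl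
@[simp] lemma d1_3 : d1 3 = 1 := rfl
@[simp] lemma d2_0 : d2 0 = 0 := rfl
@[simp] lemma d2_1 : d2 1 = 1 := rfl
@[simp] lemma d2_2 : d2 2 = 0 := rfl
@[simp] lemma d2_3 : d2 3 = 1 := rfl

variable {c1 c2 c3 c4 c5 c6 : ℂ}
@[simp] lemma Cg_00_00 : Cgen c1 c2 c3 c4 c5 c6 (idx 0 0) (idx 0 0) = c1 := rfl
@[simp] lemma Cg_00_01 : Cgen c1 c2 c3 c4 c5 c6 (idx 0 0) (idx 0 1) = 0 := rfl
@[simp] lemma Cg_00_10 : Cgen c1 c2 c3 c4 c5 c6 (idx 0 0) (idx 1 0) = 0 := rfl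
@[simp] lemma Cg_00_11 : Cgen c1 c2 c3 c4 c5 c6 (idx 0 0) (idx 1 1) = c2 := rfl
@[simp] lemma Cg_00_20 : Cgen c1 c2 c3 c4 c5 c6 (idx 0 0) (idx 2 0) = 0 := rfl
@[simp] lemma Cg_00_21 : Cgen c1 c2 c3 c4 c5 c6 (idx 0 0) (idx 2 1) = c2 := rfl
@[simp] lemma Cg_00_30 : Cgen c1 c2 c3 c4 c5 c6 (idx 0 0) (idx 3 0) = 0 := rfl
@[simp] lemma Cg_00_31 : Cgen c1 c2 c3 c4 c5 c6 (idx 0 0) (idx 3 1) = 0 := rfl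
@[simp] lemma Cg_01_00 : Cgen c1 c2 c3 c4 c5 c6 (idx 0 1) (idx 0 0) = 0 := rfl
@[simp] lemma Cg_01_01 : Cgen c1 c2 c3 c4 c5 c6 (idx 0 1) (idx 0 1) = c6 := rfl
@[simp] lemma Cg_01_10 : Cgen c1 c2 c3 c4 c5 c6 (idx 0 1) (idx 1 0) = 0 := rfl
@[simp] lemma Cg_01_11 : Cgen c1 c2 c3 c4 c5 c6 (idx 0 1) (idx 1 1) = 0 := rfl
@[simp] lemma Cg_01_20 : Cgen c1 c2 c3 c4 c5 c6 (idx 0 1) (idx 2 0) = 0 := rfl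
@[simp] lemma Cg_01_21 : Cgen c1 c2 c3 c4 c5 c6 (idx 0 1) (idx 2 1) = 0 := rfl
@[simp] lemma Cg_01_30 : Cgen c1 c2 c3 c4 c5 c6 (idx 0 1) (idx 3 0) = 0 := rfl
@[simp] lemma Cg_01_31 : Cgen c1 c2 c3 c4 c5 c6 (idx 0 1) (idx 3 1) = 0 := rfl
@[simp] lemma Cg_10_00 : Cgen c1 c2 c3 c4 c5 c6 (idx 1 0) (idx 0 0) = 0 := rfl
@[simp] lemma Cg_10_01 : Cgen c1 c2 c3 c4 c5 c6 (idx 1 0) (idx 0 1) = 0 := rfl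
@[simp] lemma Cg_10_10 : Cgen c1 c2 c3 c4 c5 c6 (idx 1 0) (idx 1 0) = c4+c5 := rfl
@[simp] lemma Cg_10_11 : Cgen c1 c2 c3 c4 c5 c6 (idx 1 0) (idx 1 1) = 0 := rfl
@[simp] lemma Cg_10_20 : Cgen c1 c2 c3 c4 c5 c6 (idx 1 0) (idx 2 0) = c4-c5 := rfl
@[simp] lemma Cg_10_21 : Cgen c1 c2 c3 c4 c5 c6 (idx 1 0) (idx 2 1) = 0 := rfl
@[simp] lemma Cg_10_30 : Cgen c1 c2 c3 c4 c5 c6 (idx 1 0) (idx 3 0) = 0 := rfl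
@[simp] lemma Cg_10_31 : Cgen c1 c2 c3 c4 c5 c6 (idx 1 0) (idx 3 1) = c3 := rfl
@[simp] lemma Cg_11_00 : Cgen c1 c2 c3 c4 c5 c6 (idx 1 1) (idx 0 0) = c3 := rfl
@[simp] lemma Cg_11_01 : Cgen c1 c2 c3 c4 c5 c6 (idx 1 1) (idx 0 1) = 0 := rfl
@[simp] lemma Cg_11_10 : Cgen c1 c2 c3 c4 c5 c6 (idx 1 1) (idx 1 0) = 0 := rfl
@[simp] lemma Cg_11_11 : Cgen c1 c2 c3 c4 c5 c6 (idx 1 1) (idx 1 1) = c4+c5 := rfl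
@[simp] lemma Cg_11_20 : Cgen c1 c2 c3 c4 c5 c6 (idx 1 1) (idx 2 0) = 0 := rfl
@[simp] lemma Cg_11_21 : Cgen c1 c2 c3 c4 c5 c6 (idx 1 1) (idx 2 1) = c4-c5 := rfl
@[simp] lemma Cg_11_30 : Cgen c1 c2 c3 c4 c5 c6 (idx 1 1) (idx 3 0) = 0 := rfl
@[simp] lemma Cg_11_31 : Cgen c1 c2 c3 c4 c5 c6 (idx 1 1) (idx 3 1) = 0 := rfl
@[simp] lemma Cg_20_00 : Cgen c1 c2 c3 c4 c5 c6 (idx 2 0) (idx 0 0) = 0 := rfl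
@[simp] lemma Cg_20_01 : Cgen c1 c2 c3 c4 c5 c6 (idx 2 0) (idx 0 1) = 0 := rfl
@[simp] lemma Cg_20_10 : Cgen c1 c2 c3 c4 c5 c6 (idx 2 0) (idx 1 0) = c4-c5 := rfl
@[simp] lemma Cg_20_11 : Cgen c1 c2 c3 c4 c5 c6 (idx 2 0) (idx 1 1) = 0 := rfl
@[simp] lemma Cg_20_20 : Cgen c1 c2 c3 c4 c5 c6 (idx 2 0) (idx 2 0) = c4+c5 := rfl
@[simp] lemma Cg_20_21 : Cgen c1 c2 c3 c4 c5 c6 (idx 2 0) (idx 2 1) = 0 := rfl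
@[simp] lemma Cg_20_30 : Cgen c1 c2 c3 c4 c5 c6 (idx 2 0) (idx 3 0) = 0 := rfl
@[simp] lemma Cg_20_31 : Cgen c1 c2 c3 c4 c5 c6 (idx 2 0) (idx 3 1) = c3 := rfl
@[simp] lemma Cg_21_00 : Cgen c1 c2 c3 c4 c5 c6 (idx 2 1) (idx 0 0) = c3 := rfl
@[simp] lemma Cg_21_01 : Cgen c1 c2 c3 c4 c5 c6 (idx 2 1) (idx 0 1) = 0 := rfl
@[simp] lemma Cg_21_10 : Cgen c1 c2 c3 c4 c5 c6 (idx 2 1) (idx 1 0) = 0 := rfl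
@[simp] lemma Cg_21_11 : Cgen c1 c2 c3 c4 c5 c6 (idx 2 1) (idx 1 1) = c4-c5 := rfl
@[simp] lemma Cg_21_20 : Cgen c1 c2 c3 c4 c5 c6 (idx 2 1) (idx 2 0) = 0 := rfl
@[simp] lemma Cg_21_21 : Cgen c1 c2 c3 c4 c5 c6 (idx 2 1) (idx 2 1) = c4+c5 := rfl
@[simp] lemma Cg_21_30 : Cgen c1 c2 c3 c4 c5 c6 (idx 2 1) (idx 3 0) = 0 := rfl
@[simp] lemma Cg_21_31 : Cgen c1 c2 c3 c4 c5 c6 (idx 2 1) (idx 3 1) = 0 := rfl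
@[simp] lemma Cg_30_00 : Cgen c1 c2 c3 c4 c5 c6 (idx 3 0) (idx 0 0) = 0 := rfl
@[simp] lemma Cg_30_01 : Cgen c1 c2 c3 c4 c5 c6 (idx 3 0) (idx 0 1) = 0 := rfl
@[simp] lemma Cg_30_10 : Cgen c1 c2 c3 c4 c5 c6 (idx 3 0) (idx 1 0) = 0 := rfl
@[simp] lemma Cg_30_11 : Cgen c1 c2 c3 c4 c5 c6 (idx 3 0) (idx 1 1) = 0 := rfl
@[simp] lemma Cg_30_20 : Cgen c1 c2 c3 c4 c5 c6 (idx 3 0) (idx 2 0) = 0 := rfl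
@[simp] lemma Cg_30_21 : Cgen c1 c2 c3 c4 c5 c6 (idx 3 0) (idx 2 1) = 0 := rfl
@[simp] lemma Cg_30_30 : Cgen c1 c2 c3 c4 c5 c6 (idx 3 0) (idx 3 0) = c6 := rfl
@[simp] lemma Cg_30_31 : Cgen c1 c2 c3 c4 c5 c6 (idx 3 0) (idx 3 1) = 0 := rfl
@[simp] lemma Cg_31_00 : Cgen c1 c2 c3 c4 c5 c6 (idx 3 1) (idx 0 0) = 0 := rfl
@[simp] lemma Cg_31_01 : Cgen c1 c2 c3 c4 c5 c6 (idx 3 1) (idx 0 1) = 0 := rfl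
@[simp] lemma Cg_31_10 : Cgen c1 c2 c3 c4 c5 c6 (idx 3 1) (idx 1 0) = c2 := rfl
@[simp] lemma Cg_31_11 : Cgen c1 c2 c3 c4 c5 c6 (idx 3 1) (idx 1 1) = 0 := rfl
@[simp] lemma Cg_31_20 : Cgen c1 c2 c3 c4 c5 c6 (idx 3 1) (idx 2 0) = c2 := rfl
@[simp] lemma Cg_31_21 : Cgen c1 c2 c3 c4 c5 c6 (idx 3 1) (idx 2 1) = 0 := rfl
@[simp] lemma Cg_31_30 : Cgen c1 c2 c3 c4 c5 c6 (idx 3 1) (idx 3 0) = 0 := rfl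
@[simp] lemma Cg_31_31 : Cgen c1 c2 c3 c4 c5 c6 (idx 3 1) (idx 3 1) = c1 := rfl


set_option maxHeartbeats 2000000

/-- Classical consistency `(D⊗D)∘B∘D = B_cl` holds iff `c₃ = 1 − c₂`,
`c₅ = c₄ − 1/2` and `c₆ = 2 − c₁ − 4c₄`. -/
theorem classic_iff (c1 c4 : ℝ) (c2 c3 c5 c6 : ℂ) :
    (∀ ρ : Matrix (Fin 2) (Fin 2) ℂ,
        DDmap (Bof (Cgen (c1 : ℂ) c2 c3 (c4 : ℂ) c5 c6) (Dmap ρ)) = Bcl ρ) ↔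
      (c3 = 1 - c2 ∧ c5 = (c4 : ℂ) - 1/2 ∧ c6 = 2 - (c1 : ℂ) - 4 * (c4 : ℂ)) := by
  constructor
  · intro h
    have hA := congrFun (congrFun (h !![1,0;0,0]) 0) 0
    have hB := congrFun (congrFun (h !![1,0;0,0]) 0) 3
    have hC := congrFun (congrFun (h !![0,1;0,0]) 0) 1
    simp only [DDmap, Bof, Bcl, Dmap, wvec, Matrix.of_apply, Fin.sum_univ_two, Fin.sum_univ_four,
      Cg_00_00, Cg_00_01, Cg_00_10, Cg_00_11, Cg_00_20, Cg_00_21, Cg_00_30, Cg_00_31, Cg_01_00, Cg_01_01, Cg_01_10, Cg_01_11, Cg_01_20, Cg_01_21, Cg_01_30, Cg_01_31, Cg_10_00, Cg_10_01, Cg_10_10, Cg_10_11, Cg_10_20, Cg_10_21, Cg_10_30, Cg_10_31, Cg_11_00, Cg_11_01, Cg_11_10, Cg_11_11, Cg_11_20, Cg_11_21, Cg_11_30, Cg_11_31, Cg_20_00, Cg_20_01, Cg_20_10, Cg_20_11, Cg_20_20, Cg_20_21, Cg_20_30, Cg_20_31, Cg_21_00, Cg_21_01, Cg_21_10, Cg_21_11,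 Cg_21_20, Cg_21_21, Cg_21_30, Cg_21_31, Cg_30_00, Cg_30_01, Cg_30_10, Cg_30_11, Cg_30_20, Cg_30_21, Cg_30_30, Cg_30_31, Cg_31_00, Cg_31_01, Cg_31_10, Cg_31_11, Cg_31_20, Cg_31_21, Cg_31_30, Cg_31_31,
      d1_0, d1_1, d1_2, d1_3, d2_0, d2_1, d2_2, d2_3, u00, u01, u10, u11,
      Matrix.cons_val_zero, Matrix.cons_val_one, Matrix.head_cons, Matrix.head_fin_const,
      mul_zero, zero_mul, add_zero, zero_add, mul_one, one_mul, mul_neg, neg_mul, neg_neg] at hA hB hC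
    ring_nf at hA hB hC
    simp only [hsx12, hsx10, hsx8, hsx6, hsx4, hsx2] at hA hB hC
    refine ⟨by linear_combination 4 * hC, by linear_combination -2 * hB, by linear_combination 4 * hA + 4 * hB⟩
  · rintro ⟨h3, h5, h6⟩ ρ
    subst h3 h5 h6
    ext p q
    fin_cases p <;> fin_cases q <;>
    · simp only [DDmap, Bof, Bcl, Dmap, wvec, Matrix.of_apply, Fin.sum_univ_two, Fin.sum_univ_four,
        Cg_00_00, Cg_00_01, Cg_00_10, Cg_00_11, Cg_00_20, Cg_00_21, Cg_00_30, Cg_00_31, Cg_01_00, Cg_01_01, Cg_01_10, Cg_01_11, Cg_01_20, Cg_01_21, Cg_01_30, Cg_01_31, Cg_10_00, Cg_10_01, Cg_10_10, Cg_10_11, Cg_10_20, Cg_10_21, Cg_10_30, Cg_10_31, Cg_11_00, Cg_11_01, Cg_11_10, Cg_11_11, Cg_11_20, Cg_11_21, Cg_11_30, Cg_11_31, Cg_20_00, Cg_20_01, Cg_20_10, Cg_20_11, Cg_20_20, Cg_20_21, Cg_20_30, Cg_20_31, Cg_21_00, Cg_21_01, Cg_21_10, Cg_21_11, Cg_21_20,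 Cg_21_21, Cg_21_30, Cg_21_31, Cg_30_00, Cg_30_01, Cg_30_10, Cg_30_11, Cg_30_20, Cg_30_21, Cg_30_30, Cg_30_31, Cg_31_00, Cg_31_01, Cg_31_10, Cg_31_11, Cg_31_20, Cg_31_21, Cg_31_30, Cg_31_31,
        d1_0, d1_1, d1_2, d1_3, d2_0, d2_1, d2_2, d2_3, u00, u01, u10, u11,
        mul_zero, zero_mul, add_zero, zero_add, mul_neg, neg_mul, neg_neg]
      ring_nf
      simp only [hsx12, hsx10, hsx8, hsx6, hsx4, hsx2]
      ring


end
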